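/- Monotonicity of the cascading reward in attraction probabilities: Let A = (a_1,...,a_n, a_⊥) be a list with weights satisfying w(a_1) ≥ w(a_2) ≥ ... ≥ w(a_n) ≥ w(a_⊥), and let ū, u: items → [0,1] be two attraction probability functions with ū(a_⊥) = u(a_⊥) = 1 and ū(a) ≥ u(a) for every a in A. Then f(A, ū, w) ≥ f(A, u, w). -/

import Mathlib

/-- The cascading reward function. -/
noncomputable def cascadeF {α : Type*} (u w : α → ℝ) : List α → ℝ
  | [] => 0
  | a :: t => u a * w a + (1 - u a) * cascadeF u w t

lemma cascadeF_le_of_w_le {α : Type*} (u w : α → ℝ) (bot : α) (c : ℝ)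
    (hubot : u bot = 1) :
    ∀ L : List α, (∀ a ∈ L ++ [bot], 0 ≤ u a ∧ u a ≤ 1) →
      (∀ a ∈ L ++ [bot], w a ≤ c) →
      cascadeF u w (L ++ [bot]) ≤ c := by
  intro L
  induction L with
  | nil =>
    intro _ hw
    simp only [List.nil_append, cascadeF, hubot]
    have := hw bot (by simp)
    nlinarith
  | cons a t ih =>
    intro hu hw
    simp only [List.cons_append, cascadeF, List.append_eq]
    have h1 := hu a (by simp)
    have h2 := hw a (by simp)
    have h3 := ih (fun b hb => hu b (by simp [hb])) (fun b hb => hw b (by simp [hb]))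
    nlinarith [h1.1, h1.2]

/-- Monotonicity of the cascading reward in the attraction probabilities:
for a list `A = (a_1, …, a_n, a_⊥)` whose weights are non-increasing
(ending at `w(a_⊥)`), and attraction functions `ū ≥ u` pointwise on `A`
with values in `[0,1]` and `ū(a_⊥) = u(a_⊥) = 1`, we have `f(A,ū,w) ≥ f(A,u,w)`. -/
theorem cascadeF_mono_in_u {α : Type*} (w ubar u : α → ℝ) (bot : α) (L : List α)
    (hsort : (L ++ [bot]).Pairwise (fun a b => w b ≤ w a))
    (hu : ∀ a ∈ L ++ [bot], 0 ≤ u a ∧ u a ≤ 1)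
    (hubar : ∀ a ∈ L ++ [bot], 0 ≤ ubar a ∧ ubar a ≤ 1)
    (hubot : ubar bot = 1) (hubot' : u bot = 1)
    (hge : ∀ a ∈ L ++ [bot], u a ≤ ubar a) :
    cascadeF u w (L ++ [bot]) ≤ cascadeF ubar w (L ++ [bot]) := by
  induction L with
  | nil => simp [cascadeF, hubot, hubot']
  | cons a t ih =>
    simp only [List.cons_append, cascadeF, List.append_eq]
    simp only [List.cons_append, List.pairwise_cons] at hsort
    have hrest_le : cascadeF u w (t ++ [bot]) ≤ w a :=
      cascadeF_le_of_w_le u w bot (w a) hubot' t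
        (fun b hb => hu b (by simp [List.mem_append] at hb ⊢; tauto))
        (fun b hb => hsort.1 b hb)
    have ih' : cascadeF u w (t ++ [bot]) ≤ cascadeF ubar w (t ++ [bot]) :=
      ih hsort.2
        (fun b hb => hu b (by simp [List.mem_append] at hb ⊢; tauto))
        (fun b hb => hubar b (by simp [List.mem_append] at hb ⊢; tauto))
        (fun b hb => hge b (by simp [List.mem_append] at hb ⊢; tauto))
    have h1 := hu a (by simp)
    have h2 := hubar a (by simp)
    have h3 := hge a (by simp)
    nlinarith
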